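/- Given the combination of the previous two facts: for φ as in the structured-action theorem, the function φ₊ defined by c₊ = S^{-1}c, x_{+,j} = x_{j−1}/j, and x_{+,0} = −M(0)^{-1}(𝕄_N(Y,S)c₊ + Σ_{i=1}^N M^{(i)}(0)x_{+,i}) equals (𝓑φ)(θ) for all θ, where (𝓑φ)(θ) = ∫₀^θ φ(ŝ)dŝ + (B(d/dθ)φ)(0) with B(λ) = M(0)^{-1}(M(0)−M(λ))/λ. -/

import Mathlib

open NormedSpace
open scoped Matrix

/-- `expTail k θ S = exp(θS) − Σ_{i<k} (θ^i/i!) S^i`; the paper's `exp_N` is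
`expTail (N+1)`. -/
noncomputable def expTail {p : ℕ} (k : ℕ) (θ : ℂ) (S : Matrix (Fin p) (Fin p) ℂ) :
    Matrix (Fin p) (Fin p) ℂ :=
  exp (θ • S) - ∑ i ∈ Finset.range k, (θ ^ i / (i.factorial : ℂ)) • S ^ i

lemma sum_mulVec' {n p : ℕ} {ι : Type*} (s : Finset ι) (A : ι → Matrix (Fin n) (Fin p) ℂ)
    (v : Fin p → ℂ) : (∑ i ∈ s, A i) *ᵥ v = ∑ i ∈ s, A i *ᵥ v :=
  map_sum (AddMonoidHom.mk' (fun M : Matrix (Fin n) (Fin p) ℂ => M *ᵥ v)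
    (fun M₁ M₂ => Matrix.add_mulVec M₁ M₂ v)) A s

lemma hasDerivAt_exp_mulVec' {n p : ℕ} (A : Matrix (Fin n) (Fin p) ℂ)
    (S : Matrix (Fin p) (Fin p) ℂ) (v : Fin p → ℂ) (θ : ℝ) :
    HasDerivAt (fun t : ℝ => A *ᵥ (exp ((t : ℂ) • S) *ᵥ v))
      (A *ᵥ ((exp ((θ : ℂ) • S) * S) *ᵥ v)) θ := by
  letI : NormedRing (Matrix (Fin p) (Fin p) ℂ) := Matrix.linftyOpNormedRing
  letI : NormedAlgebra ℂ (Matrix (Fin p) (Fin p) ℂ) := Matrix.linftyOpNormedAlgebra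
  letI : CompleteSpace (Matrix (Fin p) (Fin p) ℂ) := FiniteDimensional.complete ℂ _
  have h : HasDerivAt (fun u : ℂ => exp (u • S)) (exp ((θ:ℂ) • S) * S) (θ:ℂ) :=
    hasDerivAt_exp_smul_const S (θ:ℂ)
  let L : Matrix (Fin p) (Fin p) ℂ →ₗ[ℂ] (Fin n → ℂ) :=
    { toFun := fun M => A *ᵥ (M *ᵥ v)
      map_add' := by intro M₁ M₂; simp [Matrix.add_mulVec, Matrix.mulVec_add]
      map_smul' := by intro a M; simp [Matrix.smul_mulVec, Matrix.mulVec_smul] }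
  have hc : HasDerivAt (fun u : ℂ => A *ᵥ (exp (u • S) *ᵥ v))
      (A *ᵥ ((exp ((θ:ℂ) • S) * S) *ᵥ v)) (θ:ℂ) :=
    (L.toContinuousLinearMap.hasFDerivAt.comp_hasDerivAt _ h)
  have := hc.scomp θ Complex.ofRealCLM.hasDerivAt
  simpa [Function.comp_def] using this

/-- Theorem 4.1, structured action: for
`φ(θ) = Y exp_{N−1}(θS)c + Σ_{j<N} θ^j x_j`, the function `φ₊` defined by
`c₊ = S⁻¹c`, `x_{+,j} = x_{j−1}/j` and
`x_{+,0} = −M(0)⁻¹(𝕄_N(Y,S)c₊ + Σ_{i=1}^N M^{(i)}(0)x_{+,i})`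
equals `(𝓑φ)(θ) = ∫₀^θ φ(ŝ)dŝ + (B(d/dθ)φ)(0)` for all `θ`, where
`B(λ) = M(0)⁻¹(M(0)−M(λ))/λ` has Taylor coefficients `Bc i`
(so `M(0)·Bc i = −M^{(i+1)}(0)/(i+1)!`) and
`(B(d/dθ)φ)(0) = Σ_i Bc i · φ^{(i)}(0)` with `φ^{(i)}(0) = i! x_i` for `i < N`
and `φ^{(i)}(0) = Y S^i c` for `i ≥ N`.  Here `Mder i = M^{(i)}(0)`. -/
theorem stmt15 {n p : ℕ} (Mder : ℕ → Matrix (Fin n) (Fin n) ℂ)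
    (Bc : ℕ → Matrix (Fin n) (Fin n) ℂ)
    (hM0 : IsUnit (Mder 0))
    (hBc : ∀ i : ℕ, Mder 0 * Bc i = -((((i + 1).factorial : ℂ))⁻¹ • Mder (i + 1)))
    (Y : Matrix (Fin n) (Fin p) ℂ) (S : Matrix (Fin p) (Fin p) ℂ) (hS : IsUnit S)
    (c : Fin p → ℂ) (N : ℕ) (x : ℕ → Fin n → ℂ)
    (hsumTail : Summable fun i : ℕ =>
      (((i + N + 1).factorial : ℂ))⁻¹ •
        (Mder (i + N + 1) *ᵥ ((Y * S ^ (i + N + 1)) *ᵥ (S⁻¹ *ᵥ c))))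
    (hsumC : Summable fun i : ℕ =>
      Bc i *ᵥ (if i < N then (i.factorial : ℂ) • x i else (Y * S ^ i) *ᵥ c)) :
    let φ : ℝ → Fin n → ℂ := fun θ =>
      (Y * expTail N (θ : ℂ) S) *ᵥ c + ∑ j ∈ Finset.range N, (θ : ℂ) ^ j • x j
    let cp : Fin p → ℂ := S⁻¹ *ᵥ c
    let xp1 : ℕ → Fin n → ℂ := fun j => ((j : ℂ))⁻¹ • x (j - 1)
    let MN : Fin n → ℂ := ∑' i : ℕ,
      (((i + N + 1).factorial : ℂ))⁻¹ • (Mder (i + N + 1) *ᵥ ((Y * S ^ (i + N + 1)) *ᵥ cp))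
    let x0 : Fin n → ℂ :=
      -((Mder 0)⁻¹ *ᵥ (MN + ∑ i ∈ Finset.Icc 1 N, Mder i *ᵥ xp1 i))
    let xp : ℕ → Fin n → ℂ := fun j => if j = 0 then x0 else xp1 j
    let φp : ℝ → Fin n → ℂ := fun θ =>
      (Y * expTail (N + 1) (θ : ℂ) S) *ᵥ cp +
        ∑ j ∈ Finset.range (N + 1), (θ : ℂ) ^ j • xp j
    let Cφ : Fin n → ℂ := ∑' i : ℕ,
      Bc i *ᵥ (if i < N then (i.factorial : ℂ) • x i else (Y * S ^ i) *ᵥ c)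
    ∀ (θ : ℝ) (k : Fin n),
      φp θ k = (∫ s in (0:ℝ)..θ, φ s k) + Cφ k := by
  intro φ cp xp1 MN x0 xp φp Cφ θ k
  have hSS : S * S⁻¹ = 1 := Matrix.mul_nonsing_inv S ((Matrix.isUnit_iff_isUnit_det S).mp hS)
  have hM0' : (Mder 0)⁻¹ * Mder 0 = 1 :=
    Matrix.nonsing_inv_mul _ ((Matrix.isUnit_iff_isUnit_det _).mp hM0)
  have hScp : S *ᵥ cp = c := by
    show S *ᵥ (S⁻¹ *ᵥ c) = c
    rw [Matrix.mulVec_mulVec, hSS, Matrix.one_mulVec]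
  have hpowcp : ∀ i : ℕ, S ^ (i + 1) *ᵥ cp = S ^ i *ᵥ c := by
    intro i
    show S ^ (i+1) *ᵥ (S⁻¹ *ᵥ c) = _
    rw [Matrix.mulVec_mulVec, pow_succ, mul_assoc, hSS, mul_one]
  -- normal forms of φ and φp
  have hform : ∀ (M : ℕ) (z : ℕ → Fin n → ℂ) (w : Fin p → ℂ) (s : ℝ),
      (Y * expTail M (s:ℂ) S) *ᵥ w + ∑ j ∈ Finset.range M, (s:ℂ) ^ j • z j
      = Y *ᵥ (exp ((s:ℂ) • S) *ᵥ w)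
        - ∑ i ∈ Finset.range M, ((s:ℂ)^i / (i.factorial:ℂ)) • (Y *ᵥ (S^i *ᵥ w))
        + ∑ j ∈ Finset.range M, (s:ℂ)^j • z j := by
    intro M z w s
    rw [expTail, Matrix.mul_sub, Matrix.sub_mulVec, Matrix.mul_sum, sum_mulVec']
    simp [Matrix.mul_smul, Matrix.smul_mulVec, Matrix.mulVec_mulVec]
  -- derivative of φp is φ
  have hder : ∀ t : ℝ, HasDerivAt φp (φ t) t := by
    intro t
    have h1 := hasDerivAt_exp_mulVec' Y S cp t
    have h2 : ∀ i : ℕ, HasDerivAt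
        (fun s : ℝ => ((s:ℂ)^i / (i.factorial:ℂ)) • (Y *ᵥ (S^i *ᵥ cp)))
        (((i:ℂ) * (t:ℂ)^(i-1) / (i.factorial:ℂ)) • (Y *ᵥ (S^i *ᵥ cp))) t := fun i =>
      (((hasDerivAt_pow i (t:ℂ)).comp_ofReal).div_const _).smul_const _
    have h3 : ∀ j : ℕ, HasDerivAt (fun s : ℝ => ((s:ℂ)^j) • xp j)
        (((j:ℂ) * (t:ℂ)^(j-1)) • xp j) t := fun j =>
      ((hasDerivAt_pow j (t:ℂ)).comp_ofReal).smul_const _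
    have H := (h1.fun_sub (HasDerivAt.fun_sum (u := Finset.range (N+1)) fun i _ => h2 i)).fun_add
      (HasDerivAt.fun_sum (u := Finset.range (N+1)) fun j _ => h3 j)
    have hfun : (fun s : ℝ => Y *ᵥ (exp ((s:ℂ) • S) *ᵥ cp)
        - ∑ i ∈ Finset.range (N+1), ((s:ℂ)^i / (i.factorial:ℂ)) • (Y *ᵥ (S^i *ᵥ cp))
        + ∑ j ∈ Finset.range (N+1), (s:ℂ)^j • xp j) = φp := by
      funext s
      exact (hform (N+1) xp cp s).symm
    rw [hfun] at H
    refine H.congr_deriv ?_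
    -- φ t equals the derivative value
    rw [show φ t = (Y * expTail N (t:ℂ) S) *ᵥ c + ∑ j ∈ Finset.range N, (t:ℂ)^j • x j from rfl,
      hform N x c t]
    have e1 : Y *ᵥ ((exp ((t:ℂ) • S) * S) *ᵥ cp) = Y *ᵥ (exp ((t:ℂ) • S) *ᵥ c) := by
      rw [← Matrix.mulVec_mulVec (v := cp), hScp]
    have e2 : ∑ i ∈ Finset.range (N+1),
        (((i:ℂ) * (t:ℂ)^(i-1) / (i.factorial:ℂ)) • (Y *ᵥ (S^i *ᵥ cp)))
        = ∑ i ∈ Finset.range N, ((t:ℂ)^i / (i.factorial:ℂ)) • (Y *ᵥ (S^i *ᵥ c)) := by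
      rw [Finset.sum_range_succ']
      simp only [Nat.cast_zero, zero_mul, zero_div, zero_smul, add_zero]
      refine Finset.sum_congr rfl fun i _ => ?_
      rw [hpowcp i]
      congr 1
      rw [Nat.add_sub_cancel]
      rw [Nat.factorial_succ]
      push_cast
      have h0 : ((i.factorial : ℂ)) ≠ 0 := Nat.cast_ne_zero.2 i.factorial_ne_zero
      have h1 : ((i:ℂ) + 1) ≠ 0 := by
        intro h
        have := congrArg Complex.re h
        simp at this
        linarith [Nat.cast_nonneg (α := ℝ) i, this]
      field_simp
    have e3 : ∑ j ∈ Finset.range (N+1), (((j:ℂ) * (t:ℂ)^(j-1)) • xp j)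
        = ∑ j ∈ Finset.range N, (t:ℂ)^j • x j := by
      rw [Finset.sum_range_succ']
      simp only [Nat.cast_zero, zero_mul, zero_smul, add_zero]
      refine Finset.sum_congr rfl fun j _ => ?_
      have hxp : xp (j+1) = ((j:ℂ)+1)⁻¹ • x j := by
        show (if j+1 = 0 then x0 else xp1 (j+1)) = _
        simp only [Nat.succ_ne_zero, if_false]
        show (((j+1 : ℕ) : ℂ))⁻¹ • x (j+1-1) = _
        push_cast
        rfl
      rw [hxp, Nat.add_sub_cancel, smul_smul]
      have h1 : ((j:ℂ) + 1) ≠ 0 := by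
        intro h
        have := congrArg Complex.re h
        simp at this
        linarith [Nat.cast_nonneg (α := ℝ) j, this]
      push_cast
      rw [mul_comm ((j:ℂ)+1) ((t:ℂ)^j), mul_assoc, mul_inv_cancel₀ h1, mul_one]
    rw [e1, e2, e3]
  -- continuity of φ
  have hcont : Continuous φ := by
    have : φ = fun s : ℝ => Y *ᵥ (exp ((s:ℂ) • S) *ᵥ c)
        - ∑ i ∈ Finset.range N, ((s:ℂ)^i / (i.factorial:ℂ)) • (Y *ᵥ (S^i *ᵥ c))
        + ∑ j ∈ Finset.range N, (s:ℂ)^j • x j := funext fun s => hform N x c s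
    rw [this]
    have hexp : Continuous fun s : ℝ => Y *ᵥ (exp ((s:ℂ) • S) *ᵥ c) :=
      continuous_iff_continuousAt.2 fun t => (hasDerivAt_exp_mulVec' Y S c t).continuousAt
    refine (hexp.sub (continuous_finset_sum _ fun i _ => ?_)).add
      (continuous_finset_sum _ fun j _ => ?_)
    · exact ((Complex.continuous_ofReal.pow i).div_const _).smul continuous_const
    · exact (Complex.continuous_ofReal.pow j).smul continuous_const
  -- FTC
  have hFTC : ∫ s in (0:ℝ)..θ, φ s k = φp θ k - φp 0 k := by
    refine intervalIntegral.integral_eq_sub_of_hasDerivAt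
      (fun t _ => (hasDerivAt_pi.1 (hder t)) k) ?_
    exact (((continuous_apply k).comp hcont).intervalIntegrable _ _)
  -- value at 0
  have hφp0 : φp 0 = x0 := by
    show (Y * expTail (N+1) ((0:ℝ):ℂ) S) *ᵥ cp
      + ∑ j ∈ Finset.range (N+1), (((0:ℝ):ℂ)) ^ j • xp j = x0
    have hE : expTail (N+1) ((0:ℝ):ℂ) S = 0 := by
      rw [expTail]
      push_cast
      rw [zero_smul, exp_zero, Finset.sum_range_succ']
      simp
    rw [hE, Matrix.mul_zero, Matrix.zero_mulVec, Finset.sum_range_succ']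
    simp [xp]
  -- the constant equals x0
  have hCx0 : Cφ = x0 := by
    set v : ℕ → Fin n → ℂ :=
      fun i => if i < N then (i.factorial : ℂ) • x i else (Y * S ^ i) *ᵥ c with hv
    set u : ℕ → Fin n → ℂ :=
      fun i => (((i+1).factorial : ℂ))⁻¹ • (Mder (i+1) *ᵥ v i) with hu
    have hMC : ∀ i, Mder 0 *ᵥ (Bc i *ᵥ v i) = -(u i) := by
      intro i
      rw [Matrix.mulVec_mulVec, hBc i, Matrix.neg_mulVec, Matrix.smul_mulVec]
    let L : (Fin n → ℂ) →L[ℂ] (Fin n → ℂ) :=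
      (Matrix.mulVecLin (Mder 0)).toContinuousLinearMap
    have hL : ∀ w : Fin n → ℂ, L w = Mder 0 *ᵥ w := fun w => rfl
    have husum : Summable u := by
      have h1 : Summable fun i => Mder 0 *ᵥ (Bc i *ᵥ v i) :=
        (hsumC.map (L : (Fin n → ℂ) →ₗ[ℂ] (Fin n → ℂ)) L.continuous).congr (fun i => rfl)
      have h2 : Summable fun i => -(u i) := by
        refine h1.congr fun i => hMC i
      simpa using h2.neg
    have hM0C : Mder 0 *ᵥ Cφ = -(∑' i, u i) := by
      have h1 : Mder 0 *ᵥ Cφ = ∑' i, Mder 0 *ᵥ (Bc i *ᵥ v i) :=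
        L.map_tsum hsumC
      rw [h1, tsum_congr hMC, tsum_neg]
    have hsplit : (∑ i ∈ Finset.range N, u i) + ∑' i, u (i + N) = ∑' i, u i :=
      Summable.sum_add_tsum_nat_add N husum
    have htail : (∑' i, u (i + N)) = MN := by
      refine tsum_congr fun i => ?_
      show (((i+N+1).factorial : ℂ))⁻¹ • (Mder (i+N+1) *ᵥ v (i+N))
        = (((i + N + 1).factorial : ℂ))⁻¹ • (Mder (i + N + 1) *ᵥ ((Y * S ^ (i + N + 1)) *ᵥ cp))
      have hvi : v (i+N) = (Y * S ^ (i+N)) *ᵥ c := by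
        rw [hv]; simp
      have : (Y * S ^ (i + N + 1)) *ᵥ cp = (Y * S ^ (i+N)) *ᵥ c := by
        show (Y * S ^ (i + N + 1)) *ᵥ (S⁻¹ *ᵥ c) = _
        rw [Matrix.mulVec_mulVec, Matrix.mul_assoc, pow_succ, mul_assoc, hSS, mul_one]
      rw [hvi, this]
    have hhead : (∑ i ∈ Finset.range N, u i) = ∑ i ∈ Finset.Icc 1 N, Mder i *ᵥ xp1 i := by
      have himg : Finset.Icc 1 N = (Finset.range N).image (· + 1) := by
        ext a
        simp only [Finset.mem_Icc, Finset.mem_image, Finset.mem_range]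
        constructor
        · rintro ⟨h1, h2⟩; exact ⟨a - 1, by omega, by omega⟩
        · rintro ⟨b, hb, rfl⟩; omega
      rw [himg, Finset.sum_image (by intro a _ b _ h; have h' : a + 1 = b + 1 := h; omega)]
      refine Finset.sum_congr rfl fun i hi => ?_
      have hiN : i < N := Finset.mem_range.1 hi
      have hvi : v i = (i.factorial : ℂ) • x i := by rw [hv]; simp [hiN]
      show (((i+1).factorial : ℂ))⁻¹ • (Mder (i+1) *ᵥ v i) = Mder (i+1) *ᵥ xp1 (i+1)
      have hxp1 : xp1 (i+1) = (((i:ℂ)+1))⁻¹ • x i := by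
        show (((i+1:ℕ) : ℂ))⁻¹ • x (i+1-1) = _
        push_cast
        rfl
      rw [hvi, hxp1, Matrix.mulVec_smul, Matrix.mulVec_smul, smul_smul]
      congr 1
      rw [Nat.factorial_succ]
      have h0 : ((i.factorial : ℂ)) ≠ 0 := Nat.cast_ne_zero.2 i.factorial_ne_zero
      have h1 : ((i:ℂ) + 1) ≠ 0 := by
        intro h
        have := congrArg Complex.re h
        simp at this
        linarith [Nat.cast_nonneg (α := ℝ) i, this]
      push_cast
      field_simp
    have hfinal : Mder 0 *ᵥ Cφ = -(MN + ∑ i ∈ Finset.Icc 1 N, Mder i *ᵥ xp1 i) := by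
      rw [hM0C, ← hsplit, hhead, htail, add_comm]
    have h2 : MN + ∑ i ∈ Finset.Icc 1 N, Mder i *ᵥ xp1 i = -(Mder 0 *ᵥ Cφ) := by
      rw [hfinal, neg_neg]
    have h3 : (Mder 0)⁻¹ *ᵥ (MN + ∑ i ∈ Finset.Icc 1 N, Mder i *ᵥ xp1 i) = -Cφ := by
      rw [h2, Matrix.mulVec_neg, Matrix.mulVec_mulVec, hM0', Matrix.one_mulVec]
    show Cφ = -((Mder 0)⁻¹ *ᵥ (MN + ∑ i ∈ Finset.Icc 1 N, Mder i *ᵥ xp1 i))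
    rw [h3, neg_neg]
  rw [hFTC, hφp0, hCx0]
  ring
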